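/- Let m > 2 be an integer and b > 0 with b ≤ (m/(m−2))². Then for every a > 0 the equation ((1+x)/(b+x))^{m-1} = a·x has exactly one solution x ≥ 0 with x > 0. -/

import Mathlib

open Real Filter Set

lemma quad14 (m : ℕ) (hm : 2 < m) (b : ℝ) (hb : 0 < b)
    (hbm : b ≤ ((m : ℝ) / (m - 2)) ^ 2) (x : ℝ) (hx : 0 < x) :
    0 ≤ (1+x)*(b+x) - ((m:ℝ)-1)*(b-1)*x ∧
      ((1+x)*(b+x) - ((m:ℝ)-1)*(b-1)*x = 0 → x = Real.sqrt b) := by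
  set t := Real.sqrt b with htdef
  have ht0 : 0 ≤ t := Real.sqrt_nonneg b
  have htb : t^2 = b := Real.sq_sqrt hb.le
  have hm2 : (2:ℝ) < m := by exact_mod_cast hm
  have hden : (0:ℝ) < (m:ℝ) - 2 := by linarith
  have ht : t * ((m:ℝ)-2) ≤ m := by
    have h1 : t ≤ (m:ℝ)/((m:ℝ)-2) := by
      calc t ≤ Real.sqrt (((m:ℝ)/((m:ℝ)-2))^2) := Real.sqrt_le_sqrt hbm
        _ = (m:ℝ)/((m:ℝ)-2) := Real.sqrt_sq (by positivity)
    exact (le_div_iff₀ hden).mp h1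
  have hA : 0 ≤ (t+1)*((m:ℝ) - t*((m:ℝ)-2)) :=
    mul_nonneg (by linarith) (by linarith)
  have hiden : (1+x)*(b+x) - ((m:ℝ)-1)*(b-1)*x
      = (x - t)^2 + ((t+1)*((m:ℝ) - t*((m:ℝ)-2)))*x := by
    have hbt : b = t^2 := htb.symm
    rw [hbt]; ring
  constructor
  · rw [hiden]
    have := mul_nonneg hA hx.le
    nlinarith [sq_nonneg (x - t)]
  · intro h
    rw [hiden] at h
    have h2 : (x - t)^2 = 0 := by nlinarith [sq_nonneg (x - t), mul_nonneg hA hx.le]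
    have := pow_eq_zero_iff (n := 2) (by norm_num) |>.mp h2
    linarith [sub_eq_zero.mp this]

lemma deriv14 (b : ℝ) (N : ℕ) (x : ℝ) (hx : 0 < x) (hb : 0 < b) :
    HasDerivAt (fun y => (N:ℝ) * Real.log (1+y) - (N:ℝ) * Real.log (b+y) - Real.log y)
      ((N:ℝ)/(1+x) - (N:ℝ)/(b+x) - 1/x) x := by
  have h1 : HasDerivAt (fun y:ℝ => 1+y) 1 x := (hasDerivAt_id x).const_add 1
  have h2 : HasDerivAt (fun y:ℝ => b+y) 1 x := (hasDerivAt_id x).const_add b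
  have hl1 := (h1.log (by linarith)).const_mul (N:ℝ)
  have hl2 := (h2.log (by linarith)).const_mul (N:ℝ)
  have hl3 := Real.hasDerivAt_log (ne_of_gt hx)
  have := (hl1.sub hl2).sub hl3
  refine this.congr_deriv ?_
  ring

theorem stmt14 (m : ℕ) (hm : 2 < m) (b : ℝ) (hb : 0 < b)
    (hbm : b ≤ ((m : ℝ) / (m - 2)) ^ 2) :
    ∀ a : ℝ, 0 < a →
      ∃! x : ℝ, 0 < x ∧ ((1 + x) / (b + x)) ^ (m - 1) = a * x := by
  intro a ha
  set N : ℕ := m - 1 with hNdef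
  have hN : (N:ℝ) = (m:ℝ) - 1 := by
    have h1 : (1:ℕ) ≤ m := by omega
    push_cast [hNdef, Nat.cast_sub h1]; ring
  set L : ℝ → ℝ := fun y => (N:ℝ) * Real.log (1+y) - (N:ℝ) * Real.log (b+y) - Real.log y
    with hLdef
  -- key equivalence
  have hkey : ∀ x : ℝ, 0 < x → (((1 + x) / (b + x)) ^ (m - 1) = a * x ↔ L x = Real.log a) := by
    intro x hx
    have h1x : (0:ℝ) < 1 + x := by linarith
    have hbx : (0:ℝ) < b + x := by linarith
    have hLHSpos : (0:ℝ) < ((1 + x) / (b + x)) ^ (m-1) := by positivity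
    have hlog : Real.log (((1 + x) / (b + x)) ^ (m-1))
        = (N:ℝ) * Real.log (1+x) - (N:ℝ) * Real.log (b+x) := by
      rw [Real.log_pow, Real.log_div (ne_of_gt h1x) (ne_of_gt hbx)]
      ring
    constructor
    · intro h
      have h2 := congrArg Real.log h
      rw [hlog, Real.log_mul (ne_of_gt ha) (ne_of_gt hx)] at h2
      simp only [hLdef]; linarith
    · intro h
      have h2 : Real.log (((1 + x) / (b + x)) ^ (m-1)) = Real.log (a * x) := by
        rw [hlog, Real.log_mul (ne_of_gt ha) (ne_of_gt hx)]
        simp only [hLdef] at h; linarith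
      calc ((1 + x) / (b + x)) ^ (m-1) = Real.exp (Real.log (((1 + x) / (b + x)) ^ (m-1))) :=
            (Real.exp_log hLHSpos).symm
        _ = Real.exp (Real.log (a * x)) := by rw [h2]
        _ = a * x := Real.exp_log (by positivity)
  -- derivative facts
  have hder : ∀ x ∈ Ioi (0:ℝ), HasDerivAt L ((N:ℝ)/(1+x) - (N:ℝ)/(b+x) - 1/x) x :=
    fun x hx => deriv14 b N x hx hb
  have hdform : ∀ x : ℝ, 0 < x →
      (N:ℝ)/(1+x) - (N:ℝ)/(b+x) - 1/x
        = -((1+x)*(b+x) - ((m:ℝ)-1)*(b-1)*x) / (x*(1+x)*(b+x)) := by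
    intro x hx
    have h1x : (0:ℝ) < 1 + x := by linarith
    have hbx : (0:ℝ) < b + x := by linarith
    rw [hN]
    field_simp
    ring
  have hdnonpos : ∀ x ∈ Ioi (0:ℝ), (N:ℝ)/(1+x) - (N:ℝ)/(b+x) - 1/x ≤ 0 := by
    intro x hx
    rw [hdform x hx]
    have hq := (quad14 m hm b hb hbm x hx).1
    have h1x : (0:ℝ) < 1 + x := by simp at hx; linarith
    have hbx : (0:ℝ) < b + x := by simp at hx; linarith
    have hpos : (0:ℝ) < x*(1+x)*(b+x) := by
      simp at hx; positivity
    exact div_nonpos_of_nonpos_of_nonneg (by linarith) hpos.le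
  have hcont : ContinuousOn L (Ioi 0) :=
    fun x hx => ((hder x hx).differentiableAt.continuousAt).continuousWithinAt
  have hanti : AntitoneOn L (Ioi 0) := by
    apply antitoneOn_of_deriv_nonpos (convex_Ioi 0) hcont
    · intro x hx
      rw [interior_Ioi] at hx
      exact (hder x hx).differentiableAt.differentiableWithinAt
    · intro x hx
      rw [interior_Ioi] at hx
      rw [(hder x hx).deriv]
      exact hdnonpos x hx
  -- limit at 0+
  have hg : ContinuousAt (fun y : ℝ => (N:ℝ) * Real.log (1+y) - (N:ℝ) * Real.log (b+y)) 0 := by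
    have c1 : ContinuousAt (fun y:ℝ => 1+y) 0 := by fun_prop
    have c2 : ContinuousAt (fun y:ℝ => b+y) 0 := by fun_prop
    exact (continuousAt_const.mul (c1.log (by norm_num))).sub
      (continuousAt_const.mul (c2.log (by simpa using hb.ne')))
  have hlim0 : Tendsto L (nhdsWithin 0 (Ioi 0)) atTop := by
    have h1 : Tendsto (fun y : ℝ => (N:ℝ) * Real.log (1+y) - (N:ℝ) * Real.log (b+y))
        (nhdsWithin 0 (Ioi 0)) (nhds ((N:ℝ) * Real.log (1+0) - (N:ℝ) * Real.log (b+0))) :=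
      hg.tendsto.mono_left nhdsWithin_le_nhds
    have h2 : Tendsto (fun y : ℝ => -Real.log y) (nhdsWithin 0 (Ioi 0)) atTop :=
      tendsto_neg_atBot_atTop.comp Real.tendsto_log_nhdsGT_zero
    exact (h1.add_atTop h2).congr (fun y => by simp only [hLdef]; ring)
  -- limit at +∞
  have hlimtop : Tendsto L atTop atBot := by
    have hbtop : Tendsto (fun y:ℝ => b+y) atTop atTop :=
      tendsto_atTop_add_const_left _ b tendsto_id
    have h3 : Tendsto (fun y:ℝ => (1-b)/(b+y)) atTop (nhds 0) :=
      Tendsto.div_atTop tendsto_const_nhds hbtop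
    have h4 : Tendsto (fun y:ℝ => (1+y)/(b+y)) atTop (nhds 1) := by
      have h5 : Tendsto (fun y:ℝ => 1 + (1-b)/(b+y)) atTop (nhds (1+0)) :=
        tendsto_const_nhds.add h3
      rw [add_zero] at h5
      apply h5.congr'
      filter_upwards [eventually_gt_atTop 0] with y hy
      have hbx : (0:ℝ) < b + y := by linarith
      field_simp
      ring
    have h6 : Tendsto (fun y:ℝ => (N:ℝ) * (Real.log (1+y) - Real.log (b+y))) atTop (nhds 0) := by
      have h7 : Tendsto (fun y:ℝ => Real.log ((1+y)/(b+y))) atTop (nhds (Real.log 1)) :=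
        ((Real.continuousAt_log one_ne_zero).tendsto).comp h4
      rw [Real.log_one] at h7
      have h8 := h7.const_mul ((N:ℝ))
      rw [mul_zero] at h8
      apply h8.congr'
      filter_upwards [eventually_gt_atTop 0] with y hy
      rw [Real.log_div (by linarith) (by linarith)]
    have h9 : Tendsto (fun y:ℝ => -Real.log y) atTop atBot :=
      tendsto_neg_atTop_atBot.comp Real.tendsto_log_atTop
    exact (h6.add_atBot h9).congr (fun y => by simp only [hLdef]; ring)
  -- existence via IVT
  obtain ⟨x1, hx1ge, hx1mem⟩ :=
    ((hlim0.eventually_ge_atTop (Real.log a)).and self_mem_nhdsWithin).exists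
  obtain ⟨x2, hx2le, hx2gt⟩ :=
    ((hlimtop.eventually_le_atBot (Real.log a)).and (eventually_gt_atTop x1)).exists
  have hx1pos : (0:ℝ) < x1 := hx1mem
  have hx12 : x1 ≤ x2 := hx2gt.le
  have hsub : Icc x1 x2 ⊆ Ioi 0 := fun z hz => lt_of_lt_of_le hx1pos hz.1
  obtain ⟨x, hxmem, hxeq⟩ := intermediate_value_Icc' hx12 (hcont.mono hsub) ⟨hx2le, hx1ge⟩
  have hxpos : 0 < x := hsub hxmem
  -- uniqueness helper
  have huniq : ∀ u v : ℝ, 0 < u → u < v → L u = Real.log a → L v = Real.log a → False := by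
    intro u v hu huv h1 h2
    have hvpos : 0 < v := hu.trans huv
    have hconst : ∀ z ∈ Icc u v, L z = Real.log a := by
      intro z hz
      have hz0 : 0 < z := lt_of_lt_of_le hu hz.1
      have hle1 : L z ≤ L u := hanti (mem_Ioi.mpr hu) (mem_Ioi.mpr hz0) hz.1
      have hle2 : L v ≤ L z := hanti (mem_Ioi.mpr hz0) (mem_Ioi.mpr hvpos) hz.2
      linarith
    have hzero : ∀ z ∈ Ioo u v, z = Real.sqrt b := by
      intro z hz
      have hz0 : 0 < z := hu.trans hz.1
      have heq : L =ᶠ[nhds z] fun _ => Real.log a := by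
        filter_upwards [Ioo_mem_nhds hz.1 hz.2] with w hw
        exact hconst w (Ioo_subset_Icc_self hw)
      have hd0 : deriv L z = 0 := by rw [heq.deriv_eq]; simp
      have h0 : (N:ℝ)/(1+z) - (N:ℝ)/(b+z) - 1/z = 0 :=
        ((hder z hz0).deriv).symm.trans hd0
      rw [hdform z hz0] at h0
      have hdenom : x*(1+z)*(b+z) ≠ 0 := by positivity
      have hq0 : (1+z)*(b+z) - ((m:ℝ)-1)*(b-1)*z = 0 := by
        rcases div_eq_zero_iff.mp h0 with h | h
        · linarith [neg_eq_zero.mp h]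
        · exfalso
          have h1z : (0:ℝ) < 1 + z := by linarith
          have hbz : (0:ℝ) < b + z := by linarith
          have : (0:ℝ) < z*(1+z)*(b+z) := by positivity
          exact this.ne' h
      exact (quad14 m hm b hb hbm z hz0).2 hq0
    have hz1 : u + (v-u)/3 ∈ Ioo u v := ⟨by linarith, by linarith⟩
    have hz2 : u + (v-u)/2 ∈ Ioo u v := ⟨by linarith, by linarith⟩
    have e1 := hzero _ hz1
    have e2 := hzero _ hz2
    have : u + (v-u)/3 = u + (v-u)/2 := e1.trans e2.symm
    have : v = u := by linarith
    linarith
  refine ⟨x, ⟨hxpos, (hkey x hxpos).mpr hxeq⟩, ?_⟩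
  rintro y ⟨hypos, hyeq⟩
  have hy' : L y = Real.log a := (hkey y hypos).mp hyeq
  by_contra hne
  rcases lt_or_gt_of_ne hne with h | h
  · exact huniq y x hypos h hy' hxeq
  · exact huniq x y hxpos h hxeq hy'
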